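/- A finite lattice L with depth function dep is graded if and only if for every level ℓ from 1 up to dep(0), the union of the covering sets of the elements of level ℓ equals level ℓ−1; i.e. ⋃_{a ∈ lev_ℓ(L)} cov(a) = lev_{ℓ−1}(L). -/

import Mathlib

namespace PaperLattice

variable {N : ℕ}

/-- Depth: one less than the maximum length of a chain from `t` down to `a` w.r.t. `le`. -/
noncomputable def dep (le : Fin N → Fin N → Prop) (t a : Fin N) : ℕ :=
  sSup {k | ∃ l : List (Fin N), List.Chain' (fun x y => le y x ∧ y ≠ x) l ∧
    l.head? = some t ∧ l.getLast? = some a ∧ l.length = k + 1}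

/-- The `d`-th level: elements of depth `d`. -/
noncomputable def lev (le : Fin N → Fin N → Prop) (t : Fin N) (d : ℕ) : Set (Fin N) :=
  {a | dep le t a = d}

/-- A labelled poset is levellised if depth is monotone in the nonzero labels. -/
def Levellised (le : Fin N → Fin N → Prop) (t : Fin N) : Prop :=
  ∀ i j : Fin N, 0 < (i : ℕ) → (i : ℕ) ≤ (j : ℕ) → dep le t i ≤ dep le t j

def lt' (le : Fin N → Fin N → Prop) (a b : Fin N) : Prop := le a b ∧ a ≠ b

/-- `b` covers `a`. -/
def CovByRel (le : Fin N → Fin N → Prop) (a b : Fin N) : Prop :=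
  lt' le a b ∧ ∀ x, lt' le a x → lt' le x b → False

/-- The covering set of `a`. -/
def cov (le : Fin N → Fin N → Prop) (a : Fin N) : Set (Fin N) := {b | CovByRel le a b}

/-- The up-set of `A`. -/
def upset (le : Fin N → Fin N → Prop) (A : Set (Fin N)) : Set (Fin N) :=
  {x | ∃ a ∈ A, le a x}

def AntichainRel (le : Fin N → Fin N → Prop) (A : Set (Fin N)) : Prop :=
  ∀ a ∈ A, ∀ b ∈ A, a ≠ b → ¬ le a b

/-- Binary weight of a set of labels. -/
noncomputable def wt (A : Set (Fin N)) : ℕ :=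
  ∑ j : Fin N, A.indicator (fun j => 2 ^ (j : ℕ)) j

/-- `z` is a bottom and `o` a top for `le`. -/
def Bounds (le : Fin N → Fin N → Prop) (z o : Fin N) : Prop :=
  (∀ a, le z a) ∧ (∀ a, le a o)

/-- The order obtained from `le` by adding `m` new atoms, the `i`-th having covering set `A i`. -/
def extLe {n m : ℕ} (le : Fin n → Fin n → Prop) (A : Fin m → Set (Fin n)) :
    Fin (n + m) → Fin (n + m) → Prop := fun x y =>
  if hx : (x : ℕ) < n then
    if hy : (y : ℕ) < n then le ⟨x, hx⟩ ⟨y, hy⟩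
    else (x : ℕ) = 0
  else
    if hy : (y : ℕ) < n then
      (⟨y, hy⟩ : Fin n) ∈ upset le (A ⟨(x : ℕ) - n, by have := x.isLt; omega⟩)
    else x = y

/-- The relabelled order `π(L)`. -/
def permLe {n : ℕ} (π : Equiv.Perm (Fin n)) (le : Fin n → Fin n → Prop) :
    Fin n → Fin n → Prop := fun a b => le (π.symm a) (π.symm b)


section Aux
variable {n : ℕ} (le : Fin n → Fin n → Prop)

/-- The set whose sSup is `dep`. -/
def chainSet (t a : Fin n) : Set ℕ :=
  {k | ∃ l : List (Fin n), List.Chain' (fun x y => le y x ∧ y ≠ x) l ∧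
    l.head? = some t ∧ l.getLast? = some a ∧ l.length = k + 1}

lemma dep_eq_sSup (t a : Fin n) : dep le t a = sSup (chainSet le t a) := rfl

variable (htrans : ∀ a b c : Fin n, le a b → le b c → le a c)
  (hanti : ∀ a b : Fin n, le a b → le b a → a = b)

include htrans hanti in
lemma chainSet_bound {t a : Fin n} {k : ℕ} (hk : k ∈ chainSet le t a) : k < n := by
  obtain ⟨l, hc, hh, hl, hlen⟩ := hk
  haveI : IsTrans (Fin n) (fun x y => le y x ∧ y ≠ x) := by
    constructor
    rintro x y z ⟨h1, h2⟩ ⟨h3, h4⟩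
    refine ⟨htrans _ _ _ h3 h1, fun hzx => ?_⟩
    exact h2 (hanti _ _ (hzx ▸ h3) h1).symm
  have hp := (List.isChain_iff_pairwise).1 hc
  have hnd : l.Nodup := hp.imp (fun h => Ne.symm h.2)
  have := hnd.length_le_card
  simp only [Fintype.card_fin] at this
  omega

include htrans hanti in
lemma chainSet_bdd (t a : Fin n) : BddAbove (chainSet le t a) :=
  ⟨n, fun k hk => le_of_lt (chainSet_bound le htrans hanti hk)⟩

variable {t : Fin n} (htop : ∀ x, le x t)

include htop in
lemma chainSet_nonempty (a : Fin n) : (chainSet le t a).Nonempty := by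
  by_cases h : a = t
  · exact ⟨0, [t], List.isChain_singleton t, by simp, by simp [h], by simp⟩
  · exact ⟨1, [t, a], by
      simp only [List.Chain', List.isChain_cons_cons, List.isChain_singleton, and_true]
      exact ⟨htop a, h⟩, by simp, by simp, by simp⟩

include htrans hanti htop in
lemma dep_mem (a : Fin n) : dep le t a ∈ chainSet le t a :=
  Nat.sSup_mem (chainSet_nonempty le htop a) (chainSet_bdd le htrans hanti t a)

lemma chainSet_extend {a b : Fin n} {k : ℕ} (hk : k ∈ chainSet le t b)
    (hab : le a b ∧ a ≠ b) : k + 1 ∈ chainSet le t a := by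
  obtain ⟨l, hc, hh, hl, hlen⟩ := hk
  refine ⟨l ++ [a], ?_, ?_, by simp, by simp [hlen]⟩
  · rw [List.Chain', List.isChain_append]
    refine ⟨hc, by simp, ?_⟩
    intro x hx y hy
    simp only [List.head?_cons, Option.mem_def, Option.some.injEq] at hy
    rw [hl] at hx
    simp only [Option.mem_def, Option.some.injEq] at hx
    subst hx; subst hy
    exact hab
  · rw [List.head?_append, hh]; rfl

include htrans hanti htop in
lemma dep_lt_of_lt {a b : Fin n} (hab : le a b ∧ a ≠ b) :
    dep le t b + 1 ≤ dep le t a := by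
  have h := chainSet_extend le (dep_mem le htrans hanti htop b) hab
  exact le_csSup (chainSet_bdd le htrans hanti t a) h

/-- Telescoping a strictly decreasing chain against a strictly decreasing ρ. -/
lemma telescope (ρ : Fin n → ℕ) (hG : ∀ x y : Fin n, le x y ∧ x ≠ y → ρ y + 1 ≤ ρ x) :
    ∀ l : List (Fin n), List.Chain' (fun x y => le y x ∧ y ≠ x) l →
    ∀ u v : Fin n, l.head? = some u → l.getLast? = some v →
      ρ u + l.length ≤ ρ v + 1 := by
  intro l
  induction l with
  | nil => intro _ u v h; simp at h
  | cons x xs ih =>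
    intro hc u v hu hv
    simp only [List.head?_cons, Option.some.injEq] at hu
    subst hu
    match xs with
    | [] =>
      simp only [List.getLast?_singleton, Option.some.injEq] at hv
      subst hv; simp
    | y :: s =>
      rw [List.Chain', List.isChain_cons_cons] at hc
      obtain ⟨hxy, hc'⟩ := hc
      rw [List.getLast?_cons_cons] at hv
      have h1 := ih hc' y v rfl hv
      have h2 := hG y x hxy
      simp only [List.length_cons] at *
      omega

variable (hrefl : ∀ a : Fin n, le a a)

include hrefl htrans hanti htop in
lemma exists_cover_chain (ρ : Fin n → ℕ)
    (hρ : ∀ a b : Fin n, CovByRel le a b → ρ a = ρ b + 1) :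
    ∀ m : ℕ, ∀ x y : Fin n, ρ x ≤ m → (le x y ∧ x ≠ y) →
      ∃ k, k ∈ chainSet le y x ∧ ρ x = ρ y + k ∧ 1 ≤ k := by
  intro m
  induction m with
  | zero =>
    intro x y hx hxy
    exfalso
    classical
    obtain ⟨u, hu, hmax⟩ := Finset.exists_max_image
      (Finset.univ.filter (fun z => (le x z ∧ x ≠ z) ∧ le z y)) (dep le t)
      ⟨y, by simp [hxy.1, hxy.2, hrefl y]⟩
    simp only [Finset.mem_filter, Finset.mem_univ, true_and] at hu
    have hcov : CovByRel le x u := by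
      refine ⟨hu.1, fun w hw1 hw2 => ?_⟩
      have hwmem : (le x w ∧ x ≠ w) ∧ le w y := ⟨hw1, htrans _ _ _ hw2.1 hu.2⟩
      have h5 := hmax w (by simp [hwmem.1.1, hwmem.1.2, hwmem.2])
      have h6 := dep_lt_of_lt le htrans hanti htop (t := t) hw2
      omega
    have := hρ x u hcov
    omega
  | succ m ih =>
    intro x y hx hxy
    classical
    obtain ⟨u, hu, hmax⟩ := Finset.exists_max_image
      (Finset.univ.filter (fun z => (le x z ∧ x ≠ z) ∧ le z y)) (dep le t)
      ⟨y, by simp [hxy.1, hxy.2, hrefl y]⟩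
    simp only [Finset.mem_filter, Finset.mem_univ, true_and] at hu
    have hcov : CovByRel le x u := by
      refine ⟨hu.1, fun w hw1 hw2 => ?_⟩
      have hwmem : (le x w ∧ x ≠ w) ∧ le w y := ⟨hw1, htrans _ _ _ hw2.1 hu.2⟩
      have h5 := hmax w (by simp [hwmem.1.1, hwmem.1.2, hwmem.2])
      have h6 := dep_lt_of_lt le htrans hanti htop (t := t) hw2
      omega
    have hrxu := hρ x u hcov
    by_cases huy : u = y
    · subst huy
      refine ⟨1, ⟨[u, x], ?_, by simp, by simp, by simp⟩, by omega, le_refl 1⟩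
      simp only [List.Chain', List.isChain_cons_cons, List.isChain_singleton, and_true]
      exact hcov.1
    · have hu2 : le u y ∧ u ≠ y := ⟨hu.2, huy⟩
      obtain ⟨k, hk, hρk, hk1⟩ := ih u y (by omega) hu2
      exact ⟨k + 1, chainSet_extend le hk hcov.1, by omega, by omega⟩

include hrefl htrans hanti htop in
lemma rho_strict (ρ : Fin n → ℕ)
    (hρ : ∀ a b : Fin n, CovByRel le a b → ρ a = ρ b + 1)
    {x y : Fin n} (hxy : le x y ∧ x ≠ y) : ρ y + 1 ≤ ρ x := by
  obtain ⟨k, _, hρk, hk1⟩ :=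
    exists_cover_chain le htrans hanti htop hrefl ρ hρ (ρ x) x y (le_refl _) hxy
  omega

include hrefl htrans hanti htop in
lemma cover_dep (ρ : Fin n → ℕ)
    (hρ : ∀ a b : Fin n, CovByRel le a b → ρ a = ρ b + 1)
    {a b : Fin n} (hab : CovByRel le a b) :
    dep le t a = dep le t b + 1 := by
  have hge := dep_lt_of_lt le htrans hanti htop (t := t) hab.1
  obtain ⟨l, hc, hh, hl, hlen⟩ := dep_mem le htrans hanti htop a
  have h1 := telescope le ρ (fun x y h => rho_strict le htrans hanti htop hrefl ρ hρ h)
    l hc t a hh hl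
  rw [hlen] at h1
  have h2 : ρ b ≤ ρ t + dep le t b := by
    by_cases hbt : b = t
    · subst hbt; omega
    · obtain ⟨k, hk, hρk, _⟩ := exists_cover_chain le htrans hanti htop hrefl ρ hρ
        (ρ b) b t (le_refl _) ⟨htop b, hbt⟩
      have := le_csSup (chainSet_bdd le htrans hanti t b) hk
      rw [← dep_eq_sSup] at this
      omega
  have h3 := hρ a b hab
  omega

include htrans hanti htop in
lemma exists_covered {z b : Fin n} (hbot : ∀ x, le z x) (hzb : z ≠ b) :
    ∃ a, CovByRel le a b := by
  classical
  obtain ⟨a, ha, hmin⟩ := Finset.exists_min_image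
    (Finset.univ.filter (fun x => le x b ∧ x ≠ b)) (dep le t)
    ⟨z, by simp [hbot b, hzb]⟩
  simp only [Finset.mem_filter, Finset.mem_univ, true_and] at ha
  refine ⟨a, ha, fun w hw1 hw2 => ?_⟩
  have h5 := hmin w (by simp [hw2.1, hw2.2])
  have h6 := dep_lt_of_lt le htrans hanti htop (t := t) hw1
  omega

end Aux

/-- a finite bounded lattice is graded iff for every level `ℓ` from `1` to
`dep 0`, the union of the covering sets of the elements of level `ℓ` is level `ℓ - 1`. -/
theorem statement11 {n : ℕ} (hn : 2 ≤ n) (L : Lattice (Fin n))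
    (hb : Bounds L.le ⟨0, by omega⟩ ⟨1, by omega⟩) :
    (∃ ρ : Fin n → ℕ, ∀ a b : Fin n, CovByRel L.le a b → ρ a = ρ b + 1) ↔
      (∀ ℓ : ℕ, 1 ≤ ℓ → ℓ ≤ dep L.le ⟨1, by omega⟩ ⟨0, by omega⟩ →
        {b : Fin n | ∃ a ∈ lev L.le ⟨1, by omega⟩ ℓ, b ∈ cov L.le a} =
          lev L.le ⟨1, by omega⟩ (ℓ - 1)) := by
  obtain ⟨hbot, htop⟩ := hb
  have hrefl : ∀ a, L.le a a := fun a => L.le_refl a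
  have htrans : ∀ a b c, L.le a b → L.le b c → L.le a c := fun a b c => L.le_trans a b c
  have hanti : ∀ a b : Fin n, L.le a b → L.le b a → a = b := fun a b => L.le_antisymm a b
  set o : Fin n := ⟨1, by omega⟩ with ho
  set z : Fin n := ⟨0, by omega⟩ with hz
  constructor
  · rintro ⟨ρ, hρ⟩ ℓ hl1 hl2
    ext b
    simp only [Set.mem_setOf_eq, lev, cov]
    constructor
    · rintro ⟨a, ha, hab⟩
      have hk := cover_dep L.le htrans hanti htop hrefl ρ hρ hab
      omega
    · intro hbl
      have hbz : z ≠ b := by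
        rintro rfl
        omega
      obtain ⟨a, hcov⟩ := exists_covered L.le htrans hanti htop hbot hbz
      have hk := cover_dep L.le htrans hanti htop hrefl ρ hρ hcov
      exact ⟨a, by omega, hcov⟩
  · intro hcond
    refine ⟨dep L.le o, fun a b hab => ?_⟩
    have hao : a ≠ o := by
      rintro rfl
      exact hab.1.2 (hanti _ _ hab.1.1 (htop b))
    have h1 := dep_lt_of_lt L.le htrans hanti htop (t := o) ⟨htop a, hao⟩
    have h2 : dep L.le o a ≤ dep L.le o z := by
      by_cases haz : a = z
      · exact le_of_eq (by rw [haz])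
      · have := dep_lt_of_lt L.le htrans hanti htop (t := o) ⟨hbot a, Ne.symm haz⟩
        omega
    have heq := hcond (dep L.le o a) (by omega) h2
    rw [Set.ext_iff] at heq
    have hbmem := (heq b).1 ⟨a, rfl, hab⟩
    simp only [lev, Set.mem_setOf_eq] at hbmem
    omega

end PaperLattice
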